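/- Let ℋ, λ ∈ ℝ with ℋ²/4 + λ > 0, and set α₊ = ℋ/2 + √(ℋ²/4+λ), α₋ = ℋ/2 − √(ℋ²/4+λ). Fix s₀ ∈ ℝ. Let u : ℝ → ℝ be continuous with |u(ς)| ≤ C·e^{−α₊ς} for all ς ≥ s₀, where C ≥ 0. Then for all s ≥ s₀: |G₀(u)(s)| ≤ (C/(α₊−α₋))·( 1/(α₊−α₋) + (s − s₀) )·e^{−α₊ s}, where G₀(u)(s) = (1/(α₊−α₋))·( −e^{−α₋ s}·∫_s^{∞} e^{α₋ ς} u(ς) dς − e^{−α₊ s}·∫_{s₀}^{s} e^{α₊ ς} u(ς) dς ). -/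

import Mathlib

open MeasureTheory

lemma exp_ioi_int (a b : ℝ) (hb : 0 < b) :
    ∫ x in Set.Ioi a, Real.exp (-b * x) = Real.exp (-b * a) / b := by
  have hderiv : ∀ x ∈ Set.Ici a,
      HasDerivAt (fun x => -Real.exp (-b * x) / b) (Real.exp (-b * x)) x := by
    intro x _
    have h1 : HasDerivAt (fun x : ℝ => -b * x) (-b) x := by
      simpa using (hasDerivAt_id x).const_mul (-b)
    have h2 := (Real.hasDerivAt_exp (-b * x)).comp x h1
    have h3 := (h2.div_const b).neg
    have e1 : (fun x => -Real.exp (-b * x) / b) = -fun x => (Real.exp ∘ HMul.hMul (-b)) x / b := by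
      ext y; simp [Function.comp, neg_div]
    rw [e1]
    refine h3.congr_deriv ?_
    rw [mul_neg, neg_div, neg_neg, mul_div_cancel_right₀ _ hb.ne']
  have hint : IntegrableOn (fun x => Real.exp (-b * x)) (Set.Ioi a) :=
    exp_neg_integrableOn_Ioi a hb
  have htend : Filter.Tendsto (fun x => -Real.exp (-b * x) / b) Filter.atTop (nhds 0) := by
    have h1 : Filter.Tendsto (fun x : ℝ => -b * x) Filter.atTop Filter.atBot := by
      simpa [Function.comp_def, neg_mul] using
        Filter.tendsto_neg_atTop_atBot.comp (Filter.tendsto_id.const_mul_atTop hb)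
    have h2 := Real.tendsto_exp_atBot.comp h1
    have := (h2.neg).div_const b
    simpa using this
  have := MeasureTheory.integral_Ioi_of_hasDerivAt_of_tendsto' hderiv hint htend
  rw [this]
  field_simp
  ring

/-- Property (2) of `G₀`, critical case: applied to a function decaying like
`e^{-αp s}`, `G₀` produces at worst a linear-in-`s` correction to the weight. -/
theorem stmt_10 (ℋ lam : ℝ) (hpos : 0 < ℋ ^ 2 / 4 + lam)
    (αp αm : ℝ)
    (hαp : αp = ℋ / 2 + Real.sqrt (ℋ ^ 2 / 4 + lam))
    (hαm : αm = ℋ / 2 - Real.sqrt (ℋ ^ 2 / 4 + lam))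
    (s₀ : ℝ)
    (u : ℝ → ℝ) (hu : Continuous u)
    (C : ℝ) (hC : 0 ≤ C)
    (hbound : ∀ ς : ℝ, s₀ ≤ ς → |u ς| ≤ C * Real.exp (-αp * ς)) :
    ∀ s : ℝ, s₀ ≤ s →
      |(1 / (αp - αm)) *
        (-(Real.exp (-αm * s) * ∫ ς in Set.Ioi s, Real.exp (αm * ς) * u ς)
          - Real.exp (-αp * s) * ∫ ς in s₀..s, Real.exp (αp * ς) * u ς)|
      ≤ (C / (αp - αm)) * (1 / (αp - αm) + (s - s₀)) * Real.exp (-αp * s) := by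
  intro s hs
  have hsq : 0 < Real.sqrt (ℋ ^ 2 / 4 + lam) := Real.sqrt_pos.2 hpos
  set d : ℝ := αp - αm with hd
  have hdpos : 0 < d := by rw [hd, hαp, hαm]; linarith
  -- Bound on the interval integral
  have hB : |∫ ς in s₀..s, Real.exp (αp * ς) * u ς| ≤ C * (s - s₀) := by
    have := intervalIntegral.norm_integral_le_of_norm_le_const
      (a := s₀) (b := s) (C := C) (f := fun ς => Real.exp (αp * ς) * u ς) ?_
    · rw [abs_of_nonneg (by linarith)] at this
      simpa using this
    · intro x hx
      rw [Set.uIoc_of_le hs] at hx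
      have hb := hbound x hx.1.le
      have : ‖Real.exp (αp * x) * u x‖ = Real.exp (αp * x) * |u x| := by
        rw [norm_mul, Real.norm_eq_abs, Real.norm_eq_abs, abs_of_pos (Real.exp_pos _)]
      rw [this]
      calc Real.exp (αp * x) * |u x| ≤ Real.exp (αp * x) * (C * Real.exp (-αp * x)) := by
            exact mul_le_mul_of_nonneg_left hb (Real.exp_pos _).le
        _ = C := by rw [← mul_assoc, mul_comm (Real.exp (αp * x)) C, mul_assoc,
            ← Real.exp_add]; simp
  -- Bound on the Ioi integral
  have hmaj : Integrable (fun x => C * Real.exp (-d * x))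
      (volume.restrict (Set.Ioi s)) :=
    (exp_neg_integrableOn_Ioi s hdpos).const_mul C
  have hA : |∫ ς in Set.Ioi s, Real.exp (αm * ς) * u ς| ≤ C * Real.exp (-d * s) / d := by
    have hb : ∀ᵐ x ∂(volume.restrict (Set.Ioi s)),
        ‖Real.exp (αm * x) * u x‖ ≤ C * Real.exp (-d * x) := by
      filter_upwards [ae_restrict_mem measurableSet_Ioi] with x hx
      have hx' : s₀ ≤ x := le_trans hs (le_of_lt hx)
      have hbx := hbound x hx'
      have : ‖Real.exp (αm * x) * u x‖ = Real.exp (αm * x) * |u x| := by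
        rw [norm_mul, Real.norm_eq_abs, Real.norm_eq_abs, abs_of_pos (Real.exp_pos _)]
      rw [this]
      calc Real.exp (αm * x) * |u x| ≤ Real.exp (αm * x) * (C * Real.exp (-αp * x)) :=
            mul_le_mul_of_nonneg_left hbx (Real.exp_pos _).le
        _ = C * Real.exp (-d * x) := by
            rw [mul_comm, mul_assoc, ← Real.exp_add]
            rw [hd]
            ring_nf
    have := MeasureTheory.norm_integral_le_of_norm_le hmaj hb
    rw [Real.norm_eq_abs] at this
    calc |∫ ς in Set.Ioi s, Real.exp (αm * ς) * u ς|
        ≤ ∫ x in Set.Ioi s, C * Real.exp (-d * x) := this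
      _ = C * (Real.exp (-d * s) / d) := by
          rw [MeasureTheory.integral_const_mul, exp_ioi_int s d hdpos]
      _ = C * Real.exp (-d * s) / d := by ring
  -- Combine
  have key : Real.exp (-αm * s) * Real.exp (-d * s) = Real.exp (-αp * s) := by
    rw [← Real.exp_add]; congr 1; rw [hd]; ring
  rw [abs_mul, abs_of_pos (by positivity : (0:ℝ) < 1 / d)]
  have htri : |-(Real.exp (-αm * s) * ∫ ς in Set.Ioi s, Real.exp (αm * ς) * u ς)
      - Real.exp (-αp * s) * ∫ ς in s₀..s, Real.exp (αp * ς) * u ς|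
      ≤ Real.exp (-αm * s) * (C * Real.exp (-d * s) / d)
        + Real.exp (-αp * s) * (C * (s - s₀)) := by
    calc |-(Real.exp (-αm * s) * ∫ ς in Set.Ioi s, Real.exp (αm * ς) * u ς)
        - Real.exp (-αp * s) * ∫ ς in s₀..s, Real.exp (αp * ς) * u ς|
        ≤ |Real.exp (-αm * s) * ∫ ς in Set.Ioi s, Real.exp (αm * ς) * u ς|
          + |Real.exp (-αp * s) * ∫ ς in s₀..s, Real.exp (αp * ς) * u ς| := by
          calc |-(Real.exp (-αm * s) * ∫ ς in Set.Ioi s, Real.exp (αm * ς) * u ς)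
              - Real.exp (-αp * s) * ∫ ς in s₀..s, Real.exp (αp * ς) * u ς|
              ≤ |-(Real.exp (-αm * s) * ∫ ς in Set.Ioi s, Real.exp (αm * ς) * u ς)|
                + |Real.exp (-αp * s) * ∫ ς in s₀..s, Real.exp (αp * ς) * u ς| :=
                abs_sub _ _
            _ = _ := by rw [abs_neg]
      _ ≤ Real.exp (-αm * s) * (C * Real.exp (-d * s) / d)
          + Real.exp (-αp * s) * (C * (s - s₀)) := by
          rw [abs_mul, abs_mul, abs_of_pos (Real.exp_pos _), abs_of_pos (Real.exp_pos _)]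
          exact add_le_add
            (mul_le_mul_of_nonneg_left hA (Real.exp_pos _).le)
            (mul_le_mul_of_nonneg_left hB (Real.exp_pos _).le)
  calc 1 / d * |-(Real.exp (-αm * s) * ∫ ς in Set.Ioi s, Real.exp (αm * ς) * u ς)
      - Real.exp (-αp * s) * ∫ ς in s₀..s, Real.exp (αp * ς) * u ς|
      ≤ 1 / d * (Real.exp (-αm * s) * (C * Real.exp (-d * s) / d)
        + Real.exp (-αp * s) * (C * (s - s₀))) :=
        mul_le_mul_of_nonneg_left htri (by positivity)
    _ = (C / d) * (1 / d + (s - s₀)) * Real.exp (-αp * s) := by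
        rw [show Real.exp (-αm * s) * (C * Real.exp (-d * s) / d)
          = (Real.exp (-αm * s) * Real.exp (-d * s)) * C / d by ring, key]
        field_simp
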